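/- In the two-agent case of the unimprovability argument: suppose w₁, w₂ > 0 and there exist functions h₁, h₂ : ℝ → ℝ such that for all valuation pairs (v₁, v₂) of reals with w₁v₁ + w₂v₂ > 0 the quantity |h₁(v₂) + h₂(v₁) − (w₂/w₁)v₂ − (w₁/w₂)v₁| < ε, and for all pairs with w₁v₁ + w₂v₂ < 0 we have |h₁(v₂) + h₂(v₁)| < ε. Then we derive a contradiction: no such h₁, h₂ exist for valuations ranging over all of ℝ. -/

import Mathlib

/-- in the two-agent unimprovability argument with unbounded
valuations, no functions `h₁, h₂` can make the budget imbalance uniformly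
smaller than `ε`. -/
theorem stmt_17 (w₁ w₂ : ℝ) (hw₁ : 0 < w₁) (hw₂ : 0 < w₂) (ε : ℝ) (hε : 0 < ε) :
    ¬ ∃ h₁ h₂ : ℝ → ℝ, ∀ v₁ v₂ : ℝ,
        (w₁ * v₁ + w₂ * v₂ > 0 →
          |h₁ v₂ + h₂ v₁ - (w₂ / w₁) * v₂ - (w₁ / w₂) * v₁| < ε) ∧
        (w₁ * v₁ + w₂ * v₂ < 0 → |h₁ v₂ + h₂ v₁| < ε) := by
  rintro ⟨h₁, h₂, H⟩
  set t : ℝ := 5 * ε * w₁ / w₂ with ht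
  have htpos : 0 < t := by positivity
  set x : ℝ := 2 * (w₂ / w₁) * t with hx
  have hxpos : 0 < x := by positivity
  have hkey : (w₂ / w₁) * t = 5 * ε := by
    field_simp [ht]
    rw [ht]; field_simp
  have hA := (H 0 t).1 (by nlinarith)
  have hB := (H 0 (-t)).2 (by nlinarith)
  have hC := (H x (-t)).1 (by
    have : w₁ * x = 2 * w₂ * t := by
      field_simp [hx]
      rw [hx]; field_simp
    nlinarith)
  have hD := (H x t).1 (by
    have : w₁ * x = 2 * w₂ * t := by
      field_simp [hx]
      rw [hx]; field_simp
    nlinarith)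
  rw [abs_lt] at hA hB hC hD
  nlinarith [hA.1, hA.2, hB.1, hB.2, hC.1, hC.2, hD.1, hD.2, hkey]
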